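/- arXiv:math/0107055 — 3 statements merged into one kernel-verified Lean document; each statement's English description precedes it below -/
import Mathlib

section
/- Let (F_m)_{m≥0} be a decreasing sequence of σ-fields and (φ_m)_{m≥0} a sequence of nonnegative integrable random variables. Then E[(Σ_m E[φ_m | F_m])²] ≤ 4·E[(Σ_m φ_m)²]. -/
open MeasureTheory ProbabilityTheory Finset
open scoped ENNReal

lemma key_lemma {Ω : Type*} {mΩ : MeasurableSpace Ω} (P : Measure Ω) [IsFiniteMeasure P]
    {F' : MeasurableSpace Ω} (hF : F' ≤ mΩ) {φ : Ω → ℝ} (hφ : Integrable φ P) (hpos : 0 ≤ φ)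
    {B : Ω → ℝ≥0∞} (hB : Measurable[F'] B) :
    ∫⁻ ω, B ω * ENNReal.ofReal ((P[φ|F']) ω) ∂P = ∫⁻ ω, B ω * ENNReal.ofReal (φ ω) ∂P := by
  have hc : StronglyMeasurable[mΩ] (P[φ|F']) := stronglyMeasurable_condExp.mono hF
  have hf1 : Measurable[mΩ] fun ω => ENNReal.ofReal ((P[φ|F']) ω) :=
    ENNReal.measurable_ofReal.comp hc.measurable
  have hf2 : @AEMeasurable Ω ℝ≥0∞ _ mΩ (fun ω => ENNReal.ofReal (φ ω)) P :=
    ENNReal.measurable_ofReal.comp_aemeasurable hφ.aemeasurable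
  have hBm : Measurable[mΩ] B := hB.mono hF le_rfl
  have hμ : (P.withDensity fun ω => ENNReal.ofReal ((P[φ|F']) ω)).trim hF
      = (P.withDensity fun ω => ENNReal.ofReal (φ ω)).trim hF := by
    refine Measure.ext fun s hs => ?_
    rw [trim_measurableSet_eq hF hs, trim_measurableSet_eq hF hs,
      withDensity_apply _ (hF s hs), withDensity_apply _ (hF s hs),
      ← ofReal_integral_eq_lintegral_ofReal integrable_condExp.restrict
        (ae_restrict_of_ae (condExp_nonneg (Filter.Eventually.of_forall hpos))),
      ← ofReal_integral_eq_lintegral_ofReal hφ.restrict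
        (ae_restrict_of_ae (Filter.Eventually.of_forall hpos)),
      setIntegral_condExp hF hφ hs]
  calc ∫⁻ ω, B ω * ENNReal.ofReal ((P[φ|F']) ω) ∂P
      = ∫⁻ ω, ENNReal.ofReal ((P[φ|F']) ω) * B ω ∂P := by simp_rw [mul_comm]
    _ = ∫⁻ ω, B ω ∂(P.withDensity fun ω => ENNReal.ofReal ((P[φ|F']) ω)) :=
        (lintegral_withDensity_eq_lintegral_mul P hf1 hBm).symm
    _ = ∫⁻ ω, B ω ∂((P.withDensity fun ω => ENNReal.ofReal ((P[φ|F']) ω)).trim hF) :=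
        (lintegral_trim hF hB).symm
    _ = ∫⁻ ω, B ω ∂((P.withDensity fun ω => ENNReal.ofReal (φ ω)).trim hF) := by rw [hμ]
    _ = ∫⁻ ω, B ω ∂(P.withDensity fun ω => ENNReal.ofReal (φ ω)) := lintegral_trim hF hB
    _ = ∫⁻ ω, ENNReal.ofReal (φ ω) * B ω ∂P :=
        lintegral_withDensity_eq_lintegral_mul₀ hf2 hBm.aemeasurable
    _ = ∫⁻ ω, B ω * ENNReal.ofReal (φ ω) ∂P := by simp_rw [mul_comm]

lemma rpow_two' (x : ℝ≥0∞) : x ^ (2:ℝ) = x ^ (2:ℕ) := by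
  rw [← ENNReal.rpow_natCast]; norm_num

lemma cancel_sqrt {a c : ℝ≥0∞} (ha : a ≠ ⊤) (h : a ≤ 2 * (a ^ (1/2:ℝ) * c ^ (1/2:ℝ))) :
    a ≤ 4 * c := by
  rcases eq_or_ne a 0 with h0 | h0
  · simp [h0]
  have hne : a ^ (1/2:ℝ) ≠ 0 := by
    simp [ENNReal.rpow_eq_zero_iff, h0, ha]
  have htop : a ^ (1/2:ℝ) ≠ ⊤ := ENNReal.rpow_ne_top_of_nonneg (by norm_num) ha
  have hr : a ^ (1/2:ℝ) * a ^ (1/2:ℝ) = a := by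
    rw [← ENNReal.rpow_add _ _ h0 ha]; norm_num
  have h3 : a ^ (1/2:ℝ) ≤ 2 * c ^ (1/2:ℝ) := by
    rw [← ENNReal.mul_le_mul_iff_right hne htop, hr]
    calc a ≤ 2 * (a ^ (1/2:ℝ) * c ^ (1/2:ℝ)) := h
    _ = a ^ (1/2:ℝ) * (2 * c ^ (1/2:ℝ)) := by ring
  calc a = (a ^ (1/2:ℝ)) ^ (2:ℕ) := by
        rw [← ENNReal.rpow_natCast, ← ENNReal.rpow_mul]; norm_num
    _ ≤ (2 * c ^ (1/2:ℝ)) ^ (2:ℕ) := pow_le_pow_left' h3 2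
    _ = 4 * c := by
        rw [mul_pow, ← ENNReal.rpow_natCast (c ^ (1/2:ℝ)), ← ENNReal.rpow_mul]
        norm_num

lemma sq_sum_le_tails (s : Finset ℕ) (x : ℕ → ℝ≥0∞) :
    (∑ m ∈ s, x m) ^ 2 ≤ 2 * ∑ m ∈ s, x m * ∑ n ∈ s.filter (m ≤ ·), x n := by
  have expand : (∑ m ∈ s, x m) ^ 2 = ∑ m ∈ s, ∑ n ∈ s, x m * x n := by
    rw [sq, Finset.sum_mul_sum]
  have split : ∀ m ∈ s, ∑ n ∈ s, x m * x n
      = ∑ n ∈ s.filter (m ≤ ·), x m * x n + ∑ n ∈ s.filter (¬ m ≤ ·), x m * x n := by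
    intro m _; exact (Finset.sum_filter_add_sum_filter_not s _ _).symm
  rw [expand, Finset.sum_congr rfl split, Finset.sum_add_distrib, two_mul]
  refine add_le_add (le_of_eq ?_) ?_
  · exact Finset.sum_congr rfl fun m _ => (Finset.mul_sum _ _ _).symm
  · calc ∑ m ∈ s, ∑ n ∈ s.filter (¬ m ≤ ·), x m * x n
        ≤ ∑ m ∈ s, ∑ n ∈ s.filter (· ≤ m), x m * x n := by
          refine Finset.sum_le_sum fun m hm => ?_
          refine Finset.sum_le_sum_of_subset (Finset.monotone_filter_right s ?_)
          exact fun n _ hn => le_of_not_ge hn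
      _ = ∑ n ∈ s, ∑ m ∈ s.filter (n ≤ ·), x m * x n := by
          apply Finset.sum_comm'
          intro m n
          simp only [Finset.mem_filter]
          tauto
      _ = ∑ m ∈ s, x m * ∑ n ∈ s.filter (m ≤ ·), x n := by
          refine Finset.sum_congr rfl fun n _ => ?_
          rw [← Finset.sum_mul, mul_comm]

lemma sq_sum_le_card (s : Finset ℕ) (x : ℕ → ℝ≥0∞) :
    (∑ m ∈ s, x m) ^ 2 ≤ 2 * s.card * ∑ m ∈ s, (x m) ^ 2 := by
  rw [sq, Finset.sum_mul_sum]
  calc ∑ m ∈ s, ∑ n ∈ s, x m * x n ≤ ∑ m ∈ s, ∑ n ∈ s, ((x m)^2 + (x n)^2) := by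
        gcongr with m hm n hn
        rcases le_total (x m) (x n) with h | h
        · calc x m * x n ≤ x n * x n := by gcongr
            _ = (x n)^2 := (sq _).symm
            _ ≤ _ := le_add_self
        · calc x m * x n ≤ x m * x m := by gcongr
            _ = (x m)^2 := (sq _).symm
            _ ≤ _ := le_self_add
    _ = 2 * s.card * ∑ m ∈ s, (x m) ^ 2 := by
        have h1 : ∀ m ∈ s, ∑ n ∈ s, ((x m)^2 + (x n)^2)
            = (s.card : ℝ≥0∞) * (x m)^2 + ∑ n ∈ s, (x n)^2 := by
          intro m _
          rw [Finset.sum_add_distrib, Finset.sum_const, nsmul_eq_mul]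
        rw [Finset.sum_congr rfl h1, Finset.sum_add_distrib, ← Finset.mul_sum,
          Finset.sum_const, nsmul_eq_mul]
        ring

lemma iSup_min_nat (a : ℝ≥0∞) : ⨆ K : ℕ, min a (K : ℝ≥0∞) = a := by
  refine le_antisymm (iSup_le fun K => min_le_left _ _) ?_
  rcases eq_or_ne a ⊤ with rfl | ha
  · have hmin : ∀ K : ℕ, min (⊤:ℝ≥0∞) (K:ℝ≥0∞) = K := fun K => min_eq_right le_top
    simp_rw [hmin, ENNReal.iSup_natCast, le_refl]
  · obtain ⟨K, hK⟩ := ENNReal.exists_nat_gt ha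
    exact le_iSup_of_le K (le_min le_rfl hK.le)

lemma iSup_min_sq (a : ℝ≥0∞) : ⨆ K : ℕ, (min a (K : ℝ≥0∞)) ^ 2 = a ^ 2 := by
  refine le_antisymm (iSup_le fun K => by gcongr; exact min_le_left _ _) ?_
  conv_lhs => rw [← iSup_min_nat (a ^ 2)]
  refine iSup_le fun K => le_iSup_of_le K ?_
  rcases le_total a (K : ℝ≥0∞) with h | h
  · rw [min_eq_left h]
    exact min_le_left _ _
  · rw [min_eq_right h]
    calc min (a^2) (K:ℝ≥0∞) ≤ (K:ℝ≥0∞) := min_le_right _ _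
      _ ≤ ((K:ℝ≥0∞))^2 := by
          rcases Nat.eq_zero_or_pos K with rfl | hK
          · simp
          · calc (K:ℝ≥0∞) = K * 1 := (mul_one _).symm
              _ ≤ K * K := by gcongr; exact_mod_cast hK
              _ = _ := (sq _).symm

lemma iSup_sq_of_monotone {u : ℕ → ℝ≥0∞} (hu : Monotone u) :
    (⨆ n, u n) ^ 2 = ⨆ n, (u n) ^ 2 := by
  refine le_antisymm ?_ (iSup_le fun n => by gcongr; exact le_iSup _ _)
  rw [sq, ENNReal.iSup_mul]
  refine iSup_le fun n => ?_
  rw [ENNReal.mul_iSup]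
  refine iSup_le fun m => ?_
  refine le_iSup_of_le (max n m) ?_
  rw [sq]
  exact mul_le_mul' (hu (le_max_left _ _)) (hu (le_max_right _ _))

/-- Burkholder–Davis–Gundy type inequality, decreasing σ-fields.
For a decreasing sequence of σ-fields `F m` and nonnegative integrable `φ m`,
`E[(Σ_m E[φ m | F m])²] ≤ 4 E[(Σ_m φ m)²]`, sums interpreted in `[0,∞]`. -/
theorem lintegral_sq_tsum_condexp_le_of_antitone
    {Ω : Type*} {mΩ : MeasurableSpace Ω}
    (P : Measure Ω) [IsProbabilityMeasure P]
    (F : ℕ → MeasurableSpace Ω) (hle : ∀ m, F m ≤ mΩ) (hanti : Antitone F)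
    (φ : ℕ → Ω → ℝ) (hpos : ∀ m, 0 ≤ φ m) (hint : ∀ m, Integrable (φ m) P) :
    ∫⁻ ω, (∑' m : ℕ, ENNReal.ofReal ((P[φ m|F m]) ω)) ^ 2 ∂P
      ≤ 4 * ∫⁻ ω, (∑' m : ℕ, ENNReal.ofReal (φ m ω)) ^ 2 ∂P := by
  classical
  set g : ℕ → Ω → ℝ≥0∞ := fun m ω => ENNReal.ofReal ((P[φ m|F m]) ω) with hg_def
  set h : ℕ → Ω → ℝ≥0∞ := fun m ω => ENNReal.ofReal (φ m ω) with hh_def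
  have hgm : ∀ m, Measurable[F m] (g m) := fun m =>
    ENNReal.measurable_ofReal.comp (stronglyMeasurable_condExp (f := φ m)).measurable
  have hgm' : ∀ m, Measurable[mΩ] (g m) := fun m => (hgm m).mono (hle m) le_rfl
  have hhm : ∀ m, AEMeasurable (h m) P := fun m =>
    ENNReal.measurable_ofReal.comp_aemeasurable (hint m).aemeasurable
  set T : Ω → ℝ≥0∞ := fun ω => ∑' m, h m ω with hT_def
  have hTm : AEMeasurable T P := AEMeasurable.ennreal_tsum hhm
  set C := ∫⁻ ω, T ω ^ 2 ∂P with hC_def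
  show ∫⁻ ω, (∑' m, g m ω) ^ 2 ∂P ≤ 4 * C
  by_cases hC : C = ⊤
  · rw [hC]
    simp
  have hpq : Real.HolderConjugate 2 2 := Real.HolderConjugate.two_two
  -- Step 1: each ∫ g m ^ 2 is at most 4 C
  have step1 : ∀ m, ∫⁻ ω, g m ω ^ 2 ∂P ≤ 4 * C := by
    intro m
    have hcm : ∫⁻ ω, h m ω ^ 2 ∂P ≤ C := by
      refine lintegral_mono fun ω => ?_
      gcongr
      exact ENNReal.le_tsum m
    have trunc : ∀ K : ℕ, ∫⁻ ω, (min (g m ω) K) ^ 2 ∂P ≤ 4 * C := by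
      intro K
      set B : Ω → ℝ≥0∞ := fun ω => min (g m ω) K with hB_def
      have hBm : Measurable[F m] B := (hgm m).min measurable_const
      have hBm' : Measurable[mΩ] B := (hgm' m).min measurable_const
      set a := ∫⁻ ω, B ω ^ 2 ∂P with ha_def
      have hafin : a ≠ ⊤ := by
        refine ne_top_of_le_ne_top (by simp [lt_top_iff_ne_top]
          : ((K:ℝ≥0∞)^2 * P Set.univ) ≠ ⊤) ?_
        rw [← lintegral_const]
        refine lintegral_mono fun ω => ?_
        gcongr
        exact min_le_right _ _
      have h1 : a ≤ ∫⁻ ω, B ω * g m ω ∂P := by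
        refine lintegral_mono fun ω => ?_
        rw [sq]
        gcongr
        exact min_le_left _ _
      have h2 : ∫⁻ ω, B ω * g m ω ∂P = ∫⁻ ω, B ω * h m ω ∂P :=
        key_lemma P (hle m) (hint m) (hpos m) hBm
      have h3 : ∫⁻ ω, B ω * h m ω ∂P
          ≤ (∫⁻ ω, B ω ^ (2:ℝ) ∂P) ^ (1/2:ℝ) * (∫⁻ ω, h m ω ^ (2:ℝ) ∂P) ^ (1/2:ℝ) :=
        ENNReal.lintegral_mul_le_Lp_mul_Lq P hpq hBm'.aemeasurable (hhm m)
      have h4 : a ≤ a ^ (1/2:ℝ) * (∫⁻ ω, h m ω ^ 2 ∂P) ^ (1/2:ℝ) := by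
        simp_rw [rpow_two'] at h3
        exact h1.trans (h2.le.trans h3)
      have h5 : a ≤ 4 * ∫⁻ ω, h m ω ^ 2 ∂P :=
        cancel_sqrt hafin (h4.trans (le_mul_of_one_le_left' (by norm_num)))
      exact h5.trans (mul_le_mul_right hcm 4)
    have : ∫⁻ ω, g m ω ^ 2 ∂P = ⨆ K : ℕ, ∫⁻ ω, (min (g m ω) K) ^ 2 ∂P := by
      rw [← lintegral_iSup]
      · refine lintegral_congr fun ω => (iSup_min_sq _).symm
      · exact fun K => ((hgm' m).min measurable_const).pow_const 2
      · intro K L hKL ω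
        exact pow_le_pow_left' (min_le_min le_rfl (Nat.cast_le.2 hKL)) 2
    rw [this]
    exact iSup_le trunc
  -- Step 2: partial sums
  set S : ℕ → Ω → ℝ≥0∞ := fun N ω => ∑ m ∈ Finset.range N, g m ω with hS_def
  have hSm : ∀ N, Measurable[mΩ] (S N) := fun N =>
    Finset.measurable_sum _ fun m _ => hgm' m
  have hSmono : Monotone S := by
    intro N M hNM ω
    exact Finset.sum_le_sum_of_subset (Finset.range_subset_range.2 hNM)
  have step2 : ∀ N, ∫⁻ ω, S N ω ^ 2 ∂P ≤ 4 * C := by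
    intro N
    set A := ∫⁻ ω, S N ω ^ 2 ∂P with hA_def
    set R : ℕ → Ω → ℝ≥0∞ := fun m ω => ∑ n ∈ (Finset.range N).filter (m ≤ ·), g n ω
      with hR_def
    have hRm : ∀ m, Measurable[F m] (R m) := by
      intro m
      refine Finset.measurable_sum _ fun n hn => ?_
      have hmn : m ≤ n := (Finset.mem_filter.1 hn).2
      exact (hgm n).mono (hanti hmn) le_rfl
    have hRm' : ∀ m, Measurable[mΩ] (R m) := fun m => (hRm m).mono (hle m) le_rfl
    have hAfin : A ≠ ⊤ := by
      have hb : A ≤ 2 * N * ∑ m ∈ Finset.range N, ∫⁻ ω, g m ω ^ 2 ∂P := by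
        calc A ≤ ∫⁻ ω, 2 * N * ∑ m ∈ Finset.range N, g m ω ^ 2 ∂P := by
              refine lintegral_mono fun ω => ?_
              simpa using sq_sum_le_card (Finset.range N) (fun m => g m ω)
          _ = 2 * N * ∑ m ∈ Finset.range N, ∫⁻ ω, g m ω ^ 2 ∂P := by
              rw [lintegral_const_mul]
              · rw [lintegral_finset_sum]
                exact fun m _ => (hgm' m).pow_const 2
              · exact Finset.measurable_sum _ fun m _ => (hgm' m).pow_const 2
      refine ne_top_of_le_ne_top ?_ hb
      refine ENNReal.mul_ne_top (ENNReal.mul_ne_top ENNReal.ofNat_ne_top (ENNReal.natCast_ne_top N)) ?_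
      refine (lt_of_le_of_lt (Finset.sum_le_sum fun m _ => step1 m) ?_).ne
      refine lt_of_le_of_lt (Finset.sum_le_card_nsmul _ _ (4 * C) fun m _ => le_rfl) ?_
      simp only [Finset.card_range, nsmul_eq_mul]
      exact ENNReal.mul_lt_top (by simp) (ENNReal.mul_lt_top (by simp) (lt_top_iff_ne_top.2 hC))
    have hmain : A ≤ 2 * (A ^ (1/2:ℝ) * C ^ (1/2:ℝ)) := by
      calc A ≤ ∫⁻ ω, 2 * ∑ m ∈ Finset.range N, g m ω * R m ω ∂P := by
            refine lintegral_mono fun ω => ?_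
            exact sq_sum_le_tails (Finset.range N) (fun m => g m ω)
        _ = 2 * ∑ m ∈ Finset.range N, ∫⁻ ω, g m ω * R m ω ∂P := by
            rw [lintegral_const_mul, lintegral_finset_sum]
            · exact fun m _ => (hgm' m).mul (hRm' m)
            · exact Finset.measurable_sum _ fun m _ => (hgm' m).mul (hRm' m)
        _ = 2 * ∑ m ∈ Finset.range N, ∫⁻ ω, R m ω * h m ω ∂P := by
            congr 1
            refine Finset.sum_congr rfl fun m _ => ?_
            rw [← key_lemma P (hle m) (hint m) (hpos m) (hRm m)]
            simp_rw [mul_comm]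
            rfl
        _ = 2 * ∫⁻ ω, ∑ m ∈ Finset.range N, R m ω * h m ω ∂P := by
            rw [lintegral_finset_sum']
            exact fun m _ => ((hRm' m).aemeasurable.mul (hhm m))
        _ ≤ 2 * ∫⁻ ω, S N ω * T ω ∂P := by
            gcongr with ω
            calc ∑ m ∈ Finset.range N, R m ω * h m ω
                ≤ ∑ m ∈ Finset.range N, S N ω * h m ω := by
                  refine Finset.sum_le_sum fun m _ => ?_
                  gcongr
                  exact Finset.sum_le_sum_of_subset (Finset.filter_subset _ _)
              _ = S N ω * ∑ m ∈ Finset.range N, h m ω := by rw [Finset.mul_sum]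
              _ ≤ S N ω * T ω := by
                  gcongr
                  exact ENNReal.sum_le_tsum _
        _ ≤ 2 * (A ^ (1/2:ℝ) * C ^ (1/2:ℝ)) := by
            gcongr
            have := ENNReal.lintegral_mul_le_Lp_mul_Lq P hpq (hSm N).aemeasurable hTm
            simp_rw [rpow_two'] at this
            exact this
    exact cancel_sqrt hAfin hmain
  -- Final: monotone convergence
  have hfin : ∫⁻ ω, (∑' m, g m ω) ^ 2 ∂P = ⨆ N, ∫⁻ ω, S N ω ^ 2 ∂P := by
    rw [← lintegral_iSup (fun N => (hSm N).pow_const 2)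
      (fun N M hNM ω => by gcongr; exact hSmono hNM ω)]
    refine lintegral_congr fun ω => ?_
    rw [ENNReal.tsum_eq_iSup_nat, iSup_sq_of_monotone (fun N M hNM => hSmono hNM ω)]
  rw [hfin]
  exact iSup_le step2
end

section
/- Let (F_m)_{m≥0} be an increasing sequence of σ-fields and (φ_m)_{m≥0} a sequence of nonnegative integrable random variables. Then E[(Σ_m E[φ_m | F_m])²] ≤ 4·E[(Σ_m φ_m)²]. -/
open MeasureTheory ProbabilityTheory
open scoped ENNReal

-- Lemma L, bounded case
theorem lemL_bdd {Ω : Type*} {F : MeasurableSpace Ω} {mΩ : MeasurableSpace Ω}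
    (P : Measure Ω) [IsProbabilityMeasure P] (hle : F ≤ mΩ)
    {φ : Ω → ℝ} (hpos : 0 ≤ φ) (hint : Integrable φ P)
    {r : Ω → ℝ} (hr : StronglyMeasurable[F] r) (hr0 : 0 ≤ r) {c : ℝ} (hrc : ∀ ω, r ω ≤ c) :
    ∫⁻ ω, ENNReal.ofReal ((P[φ|F]) ω) * ENNReal.ofReal (r ω) ∂P
      = ∫⁻ ω, ENNReal.ofReal (φ ω) * ENNReal.ofReal (r ω) ∂P := by
  haveI : SigmaFinite (P.trim hle) := inferInstance
  have hrmeas : StronglyMeasurable r := hr.mono hle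
  have hbd : ∀ᵐ ω ∂P, ‖r ω‖ ≤ c := Filter.Eventually.of_forall fun ω => by
    rw [Real.norm_eq_abs, abs_of_nonneg (hr0 ω)]; exact hrc ω
  have hrφ : Integrable (fun ω => r ω * φ ω) P := hint.bdd_mul hrmeas.aestronglyMeasurable hbd
  have hcond : Integrable (P[φ|F]) P := integrable_condExp
  have hrcond : Integrable (fun ω => r ω * (P[φ|F]) ω) P :=
    hcond.bdd_mul hrmeas.aestronglyMeasurable hbd
  have hcond0 : 0 ≤ᵐ[P] (P[φ|F]) := condExp_nonneg (Filter.Eventually.of_forall hpos)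
  have key : ∫ ω, r ω * (P[φ|F]) ω ∂P = ∫ ω, r ω * φ ω ∂P := by
    have h1 : P[fun ω => r ω * φ ω|F] =ᵐ[P] fun ω => r ω * (P[φ|F]) ω :=
      condExp_mul_of_stronglyMeasurable_left hr hrφ hint
    rw [← integral_congr_ae h1, integral_condExp hle]
  calc ∫⁻ ω, ENNReal.ofReal ((P[φ|F]) ω) * ENNReal.ofReal (r ω) ∂P
      = ∫⁻ ω, ENNReal.ofReal (r ω * (P[φ|F]) ω) ∂P := by
        apply lintegral_congr_ae
        filter_upwards [hcond0] with ω h0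
        rw [ENNReal.ofReal_mul (hr0 ω), mul_comm]
    _ = ENNReal.ofReal (∫ ω, r ω * (P[φ|F]) ω ∂P) := by
        rw [ofReal_integral_eq_lintegral_ofReal hrcond]
        filter_upwards [hcond0] with ω h0
        exact mul_nonneg (hr0 ω) h0
    _ = ENNReal.ofReal (∫ ω, r ω * φ ω ∂P) := by rw [key]
    _ = ∫⁻ ω, ENNReal.ofReal (φ ω) * ENNReal.ofReal (r ω) ∂P := by
        rw [ofReal_integral_eq_lintegral_ofReal hrφ
          (Filter.Eventually.of_forall fun ω => mul_nonneg (hr0 ω) (hpos ω))]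
        apply lintegral_congr fun ω => by rw [ENNReal.ofReal_mul (hr0 ω), mul_comm]

theorem lemL {Ω : Type*} {F : MeasurableSpace Ω} {mΩ : MeasurableSpace Ω}
    (P : Measure Ω) [IsProbabilityMeasure P] (hle : F ≤ mΩ)
    {φ : Ω → ℝ} (hpos : 0 ≤ φ) (hint : Integrable φ P)
    {h : Ω → ℝ≥0∞} (hh : Measurable[F] h) :
    ∫⁻ ω, ENNReal.ofReal ((P[φ|F]) ω) * h ω ∂P
      = ∫⁻ ω, ENNReal.ofReal (φ ω) * h ω ∂P := by
  have hmeas : Measurable h := hh.mono hle le_rfl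
  have hsup : ∀ ω, (⨆ n : ℕ, min (h ω) n) = h ω := by
    intro ω
    rcases eq_or_ne (h ω) ∞ with he | he
    · rw [he]
      simp only [min_top_left ..]
      exact ENNReal.iSup_natCast
    · obtain ⟨n, hn⟩ := ENNReal.exists_nat_gt he
      exact le_antisymm (iSup_le fun n => min_le_left _ _)
        (le_iSup_of_le n (le_min le_rfl hn.le))
  have step : ∀ f : Ω → ℝ, AEMeasurable f P →
      ∫⁻ ω, ENNReal.ofReal (f ω) * h ω ∂P
        = ⨆ n : ℕ, ∫⁻ ω, ENNReal.ofReal (f ω) * min (h ω) n ∂P := by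
    intro f hf
    rw [← lintegral_iSup']
    · apply lintegral_congr fun ω => ?_
      rw [← ENNReal.mul_iSup, hsup]
    · exact fun n => (ENNReal.measurable_ofReal.comp_aemeasurable hf).mul
        ((hmeas.min measurable_const)).aemeasurable
    · apply Filter.Eventually.of_forall
      intro ω i j hij
      exact mul_le_mul_right (min_le_min le_rfl (by exact_mod_cast hij)) _
  have hcondmeas : Measurable (P[φ|F]) := (stronglyMeasurable_condExp.mono hle).measurable
  rw [step _ hcondmeas.aemeasurable, step _ hint.1.aemeasurable]
  apply iSup_congr
  intro n
  have hrsm : StronglyMeasurable[F] (fun ω => (min (h ω) (n : ℝ≥0∞)).toReal) :=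
    ((hh.min measurable_const).ennreal_toReal).stronglyMeasurable
  have hofr : ∀ ω, ENNReal.ofReal ((min (h ω) (n : ℝ≥0∞)).toReal) = min (h ω) n := by
    intro ω
    exact ENNReal.ofReal_toReal (ne_top_of_le_ne_top (ENNReal.natCast_ne_top n) (min_le_right _ _))
  have := lemL_bdd P hle hpos hint hrsm
    (fun ω => ENNReal.toReal_nonneg) (c := n)
    (fun ω => by
      have : ((n : ℝ≥0∞)).toReal = (n : ℝ) := by simp
      rw [← this]
      exact ENNReal.toReal_mono (ENNReal.natCast_ne_top n) (min_le_right _ _))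
  simpa only [hofr] using this

theorem lemP (u : ℕ → ℝ≥0∞) :
    (∑' m, u m) ^ 2 ≤ 2 * ∑' m, u m * (∑' k, if m ≤ k then u k else 0) := by
  have expand : (∑' m, u m) ^ 2 = ∑' m, ∑' k, u m * u k := by
    rw [sq, ← ENNReal.tsum_mul_right]
    exact tsum_congr fun m => (ENNReal.tsum_mul_left).symm
  have key : ∀ m k : ℕ, u m * u k
      ≤ (if m ≤ k then u m * u k else 0) + (if k ≤ m then u m * u k else 0) := by
    intro m k
    rcases le_total m k with h | h
    · exact le_add_of_le_of_nonneg (by simp [h]) zero_le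
    · exact le_add_of_nonneg_of_le zero_le (by simp [h])
  calc (∑' m, u m) ^ 2 = ∑' m, ∑' k, u m * u k := expand
    _ ≤ ∑' m, ∑' k, ((if m ≤ k then u m * u k else 0) + (if k ≤ m then u m * u k else 0)) :=
        ENNReal.tsum_le_tsum fun m => ENNReal.tsum_le_tsum fun k => key m k
    _ = (∑' m, ∑' k, (if m ≤ k then u m * u k else 0))
        + ∑' m, ∑' k, (if k ≤ m then u m * u k else 0) := by
        simp_rw [ENNReal.tsum_add]
    _ = 2 * ∑' m, u m * (∑' k, if m ≤ k then u k else 0) := by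
        have h1 : ∑' m, ∑' k, (if m ≤ k then u m * u k else 0)
            = ∑' m, u m * (∑' k, if m ≤ k then u k else 0) := by
          apply tsum_congr fun m => ?_
          rw [← ENNReal.tsum_mul_left]
          exact tsum_congr fun k => by rw [mul_ite, mul_zero]
        have h2 : ∑' m, ∑' k, (if k ≤ m then u m * u k else 0)
            = ∑' m, u m * (∑' k, if m ≤ k then u k else 0) := by
          rw [ENNReal.tsum_comm]
          apply tsum_congr fun k => ?_
          rw [← ENNReal.tsum_mul_left]
          exact tsum_congr fun m => by rw [mul_ite, mul_zero, mul_comm]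
        rw [h1, h2, two_mul]

theorem lemArith {x y : ℝ≥0∞} (hx : x ≠ ∞)
    (h : x ≤ 2 * (x ^ (1/2 : ℝ) * y ^ (1/2 : ℝ))) : x ≤ 4 * y := by
  rcases eq_or_ne x 0 with rfl | hx0
  · exact zero_le
  rcases eq_or_ne y ∞ with rfl | hy
  · simp [ENNReal.mul_top]
  have hxr : x ^ (1/2 : ℝ) ≠ 0 := by
    simp [ENNReal.rpow_eq_zero_iff, hx0, hx]
  have hxrt : x ^ (1/2 : ℝ) ≠ ∞ := by
    simp [ENNReal.rpow_eq_top_iff, hx0, hx]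
  have hxx : x = x ^ (1/2 : ℝ) * x ^ (1/2 : ℝ) := by
    rw [← ENNReal.rpow_add _ _ hx0 hx]
    norm_num
  have h2 : x ^ (1/2 : ℝ) * x ^ (1/2 : ℝ) ≤ x ^ (1/2 : ℝ) * (2 * y ^ (1/2 : ℝ)) := by
    calc x ^ (1/2 : ℝ) * x ^ (1/2 : ℝ) = x := hxx.symm
      _ ≤ 2 * (x ^ (1/2 : ℝ) * y ^ (1/2 : ℝ)) := h
      _ = x ^ (1/2 : ℝ) * (2 * y ^ (1/2 : ℝ)) := by ring
  have h3 : x ^ (1/2 : ℝ) ≤ 2 * y ^ (1/2 : ℝ) := (ENNReal.mul_le_mul_iff_right hxr hxrt).mp h2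
  calc x = x ^ (1/2 : ℝ) * x ^ (1/2 : ℝ) := hxx
    _ ≤ (2 * y ^ (1/2 : ℝ)) * (2 * y ^ (1/2 : ℝ)) := mul_le_mul' h3 h3
    _ = 4 * (y ^ (1/2 : ℝ) * y ^ (1/2 : ℝ)) := by ring
    _ ≤ 4 * y := by
        rcases eq_or_ne y 0 with rfl | hy0
        · simp
        · rw [← ENNReal.rpow_add _ _ hy0 hy]; norm_num

theorem lemSqSup {f : ℕ → ℝ≥0∞} (hf : Monotone f) : (⨆ n, f n) ^ 2 = ⨆ n, f n ^ 2 := by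
  apply le_antisymm
  · rw [sq, ENNReal.iSup_mul]
    refine iSup_le fun i => ?_
    rw [ENNReal.mul_iSup]
    refine iSup_le fun j => ?_
    calc f i * f j ≤ f (max i j) * f (max i j) :=
          mul_le_mul' (hf (le_max_left i j)) (hf (le_max_right i j))
      _ = f (max i j) ^ 2 := (sq _).symm
      _ ≤ ⨆ n, f n ^ 2 := le_iSup (fun n => f n ^ 2) _
  · exact iSup_le fun n => pow_le_pow_left' (le_iSup f n) 2


/-- Burkholder–Davis–Gundy type inequality, increasing σ-fields.
For an increasing sequence of σ-fields `F m` and nonnegative integrable `φ m`,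
`E[(Σ_m E[φ m | F m])²] ≤ 4 E[(Σ_m φ m)²]`, sums interpreted in `[0,∞]`. -/
theorem lintegral_sq_tsum_condexp_le_of_monotone
    {Ω : Type*} {mΩ : MeasurableSpace Ω}
    (P : Measure Ω) [IsProbabilityMeasure P]
    (F : ℕ → MeasurableSpace Ω) (hle : ∀ m, F m ≤ mΩ) (hmono : Monotone F)
    (φ : ℕ → Ω → ℝ) (hpos : ∀ m, 0 ≤ φ m) (hint : ∀ m, Integrable (φ m) P) :
    ∫⁻ ω, (∑' m : ℕ, ENNReal.ofReal ((P[φ m|F m]) ω)) ^ 2 ∂P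
      ≤ 4 * ∫⁻ ω, (∑' m : ℕ, ENNReal.ofReal (φ m ω)) ^ 2 ∂P := by
  classical
  set g : ℕ → Ω → ℝ≥0∞ := fun m ω => ENNReal.ofReal ((P[φ m|F m]) ω) with hgdef
  have hgFmeas : ∀ m, Measurable[F m] (g m) := fun m =>
    ENNReal.measurable_ofReal.comp stronglyMeasurable_condExp.measurable
  have hgmeas : ∀ m, Measurable (g m) := fun m => (hgFmeas m).mono (hle m) le_rfl
  set B : Ω → ℝ≥0∞ := fun ω => ∑' k, ENNReal.ofReal (φ k ω) with hBdef
  have hφmeas : ∀ k, AEMeasurable (fun ω => ENNReal.ofReal (φ k ω)) P := fun k =>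
    ENNReal.measurable_ofReal.comp_aemeasurable (hint k).1.aemeasurable
  have hBmeas : AEMeasurable B P := AEMeasurable.ennreal_tsum hφmeas
  set u : ℕ → ℕ → Ω → ℝ≥0∞ := fun n m ω => if m < n then min (g m ω) n else 0 with hudef
  have huFmeas : ∀ n m, Measurable[F m] (u n m) := by
    intro n m
    by_cases h : m < n
    · have h1 : Measurable[F m] fun ω => min (g m ω) (n : ℝ≥0∞) :=
        (hgFmeas m).min measurable_const
      simpa [hudef, h] using h1
    · have h1 : Measurable[F m] fun _ : Ω => (0 : ℝ≥0∞) := measurable_const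
      simpa [hudef, h] using h1
  have humeas : ∀ n m, Measurable (u n m) := fun n m => (huFmeas n m).mono (hle m) le_rfl
  set A : ℕ → Ω → ℝ≥0∞ := fun n ω => ∑' m, u n m ω with hAdef
  have hAmeas : ∀ n, Measurable (A n) := fun n => Measurable.ennreal_tsum (humeas n)
  have hule : ∀ n m ω, u n m ω ≤ g m ω := by
    intro n m ω
    by_cases h : m < n <;> simp [hudef, h]
  -- A n is bounded
  have hAn_sum : ∀ n ω, A n ω = ∑ m ∈ Finset.range n, u n m ω := by
    intro n ω
    refine tsum_eq_sum fun m hm => ?_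
    simp only [Finset.mem_range, not_lt] at hm
    simp [hudef, Nat.not_lt.mpr hm]
  have hAle : ∀ n ω, A n ω ≤ (n : ℝ≥0∞) * n := by
    intro n ω
    rw [hAn_sum]
    calc ∑ m ∈ Finset.range n, u n m ω ≤ ∑ _m ∈ Finset.range n, (n : ℝ≥0∞) :=
        Finset.sum_le_sum fun m _ => by
          by_cases h : m < n <;> simp [hudef, h]
      _ = n * n := by simp [mul_comm]
  have hAfin : ∀ n, ∫⁻ ω, A n ω ^ 2 ∂P ≠ ∞ := by
    intro n
    have : ∫⁻ ω, A n ω ^ 2 ∂P ≤ ((n : ℝ≥0∞) * n) ^ 2 * P Set.univ := by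
      rw [← lintegral_const]
      exact lintegral_mono fun ω => pow_le_pow_left' (hAle n ω) 2
    refine ne_top_of_le_ne_top ?_ this
    simp [measure_univ, ENNReal.mul_ne_top, ENNReal.pow_ne_top, ENNReal.natCast_ne_top]
  -- key estimate
  have hkey : ∀ n, ∫⁻ ω, A n ω ^ 2 ∂P ≤ 2 * ∫⁻ ω, A n ω * B ω ∂P := by
    intro n
    set T : ℕ → Ω → ℝ≥0∞ := fun m ω => ∑' k, if m ≤ k then g k ω else 0 with hTdef
    have hTmeas : ∀ m, Measurable (T m) := fun m => Measurable.ennreal_tsum fun k => by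
      by_cases h : m ≤ k <;> simp [h, hgmeas k, measurable_const]
    have step_a : ∀ ω, A n ω ^ 2 ≤ 2 * ∑' m, u n m ω * T m ω := by
      intro ω
      refine (lemP fun m => u n m ω).trans ?_
      gcongr 2 * ?_
      refine ENNReal.tsum_le_tsum fun m => mul_le_mul_right ?_ _
      exact ENNReal.tsum_le_tsum fun k => by
        by_cases h : m ≤ k <;> simp [h, hule]
    have step_c : ∀ m, ∫⁻ ω, u n m ω * T m ω ∂P
        ≤ ∫⁻ ω, u n m ω * B ω ∂P := by
      intro m
      have expand : ∀ ω, u n m ω * T m ω = ∑' k, if m ≤ k then u n m ω * g k ω else 0 := by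
        intro ω
        rw [hTdef, ← ENNReal.tsum_mul_left]
        exact tsum_congr fun k => by rw [mul_ite, mul_zero]
      have expand2 : ∀ ω, u n m ω * B ω = ∑' k, u n m ω * ENNReal.ofReal (φ k ω) := by
        intro ω
        rw [hBdef, ← ENNReal.tsum_mul_left]
      calc ∫⁻ ω, u n m ω * T m ω ∂P
          = ∑' k, ∫⁻ ω, (if m ≤ k then u n m ω * g k ω else 0) ∂P := by
            simp_rw [expand]
            exact lintegral_tsum fun k => by
              by_cases h : m ≤ k <;>
                simp [h, ((humeas n m).mul (hgmeas k)).aemeasurable, aemeasurable_const] <;>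
                exact ((humeas n m).mul (hgmeas k)).aemeasurable
        _ ≤ ∑' k, ∫⁻ ω, u n m ω * ENNReal.ofReal (φ k ω) ∂P := by
            refine ENNReal.tsum_le_tsum fun k => ?_
            by_cases h : m ≤ k
            · simp only [h, if_true]
              have humF : Measurable[F k] (u n m) := (huFmeas n m).mono (hmono h) le_rfl
              have := lemL P (hle k) (hpos k) (hint k) humF
              refine le_of_eq ?_
              calc ∫⁻ ω, u n m ω * g k ω ∂P = ∫⁻ ω, g k ω * u n m ω ∂P := by
                    simp_rw [mul_comm]
                _ = ∫⁻ ω, ENNReal.ofReal (φ k ω) * u n m ω ∂P := this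
                _ = ∫⁻ ω, u n m ω * ENNReal.ofReal (φ k ω) ∂P := by simp_rw [mul_comm]
            · simp [h]
        _ = ∫⁻ ω, u n m ω * B ω ∂P := by
            simp_rw [expand2]
            exact (lintegral_tsum fun k =>
              ((humeas n m).aemeasurable.mul (hφmeas k))).symm
    calc ∫⁻ ω, A n ω ^ 2 ∂P ≤ ∫⁻ ω, 2 * ∑' m, u n m ω * T m ω ∂P :=
          lintegral_mono step_a
      _ = 2 * ∑' m, ∫⁻ ω, u n m ω * T m ω ∂P := by
          rw [lintegral_const_mul' _ _ ENNReal.ofNat_ne_top,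
            lintegral_tsum (f := fun m ω => u n m ω * T m ω) fun m => ((humeas n m).mul (hTmeas m)).aemeasurable]
      _ ≤ 2 * ∑' m, ∫⁻ ω, u n m ω * B ω ∂P := by
          gcongr 2 * ?_
          exact ENNReal.tsum_le_tsum step_c
      _ = 2 * ∫⁻ ω, A n ω * B ω ∂P := by
          rw [← lintegral_tsum (f := fun m ω => u n m ω * B ω) fun m => (humeas n m).aemeasurable.mul hBmeas]
          congr 1
          refine lintegral_congr fun ω => ?_
          exact ENNReal.tsum_mul_right
  -- Hölder and arithmetic
  have hbound : ∀ n, ∫⁻ ω, A n ω ^ 2 ∂P ≤ 4 * ∫⁻ ω, B ω ^ 2 ∂P := by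
    intro n
    refine lemArith (hAfin n) ?_
    refine (hkey n).trans ?_
    gcongr 2 * ?_
    have hconj : Real.HolderConjugate 2 2 := Real.HolderConjugate.two_two
    have := ENNReal.lintegral_mul_le_Lp_mul_Lq P hconj (hAmeas n).aemeasurable hBmeas
    simp only [Pi.mul_apply] at this
    have h2 : ∀ G : Ω → ℝ≥0∞, ∫⁻ ω, G ω ^ (2:ℝ) ∂P = ∫⁻ ω, G ω ^ 2 ∂P := fun G =>
      lintegral_congr fun ω => by rw [← ENNReal.rpow_natCast]; norm_num
    rw [h2, h2] at this
    exact this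
  -- supremum limit
  have humono : ∀ m ω, Monotone fun n => u n m ω := by
    intro m ω n n' hnn'
    by_cases h : m < n
    · have h' : m < n' := lt_of_lt_of_le h hnn'
      simp only [hudef, h, h', if_true]
      exact min_le_min le_rfl (by exact_mod_cast hnn')
    · simp [hudef, h]
  have hAmono : Monotone A := by
    intro n n' hnn' ω
    exact ENNReal.tsum_le_tsum fun m => humono m ω hnn'
  have hsupA : ∀ ω, (⨆ n, A n ω) = ∑' m, g m ω := by
    intro ω
    apply le_antisymm
    · exact iSup_le fun n => ENNReal.tsum_le_tsum fun m => hule n m ω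
    · rw [ENNReal.tsum_eq_iSup_sum]
      refine iSup_le fun s => ?_
      obtain ⟨N, hN⟩ := s.exists_nat_subset_range
      refine le_trans (Finset.sum_le_sum_of_subset hN) ?_
      have : ∑ m ∈ Finset.range N, g m ω
          = ⨆ c : ℕ, ∑ m ∈ Finset.range N, min (g m ω) c := by
        rw [← ENNReal.finsetSum_iSup_of_monotone]
        · refine Finset.sum_congr rfl fun m _ => ?_
          refine (le_antisymm (iSup_le fun c => min_le_left _ _) ?_).symm
          rcases eq_or_ne (g m ω) ∞ with he | he
          · rw [he]
            simp only [top_inf_eq]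
            exact ENNReal.iSup_natCast.ge
          · obtain ⟨c, hc⟩ := ENNReal.exists_nat_gt he
            exact le_iSup_of_le c (le_min le_rfl hc.le)
        · intro m c c' hcc'
          exact min_le_min le_rfl (by exact_mod_cast hcc')
      rw [this]
      refine iSup_le fun c => le_iSup_of_le (max N c) ?_
      calc ∑ m ∈ Finset.range N, min (g m ω) c
          ≤ ∑ m ∈ Finset.range N, u (max N c) m ω := by
            refine Finset.sum_le_sum fun m hm => ?_
            have hm' : m < max N c := lt_of_lt_of_le (Finset.mem_range.mp hm) (le_max_left _ _)
            simp only [hudef, hm', if_true]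
            exact min_le_min le_rfl (by exact_mod_cast le_max_right N c)
        _ ≤ A (max N c) ω := ENNReal.sum_le_tsum _
  show ∫⁻ ω, (∑' m, g m ω) ^ 2 ∂P ≤ 4 * ∫⁻ ω, B ω ^ 2 ∂P
  calc ∫⁻ ω, (∑' m, g m ω) ^ 2 ∂P
      = ∫⁻ ω, ⨆ n, A n ω ^ 2 ∂P := by
        refine lintegral_congr fun ω => ?_
        rw [← hsupA ω, lemSqSup (fun n n' h => hAmono h ω)]
    _ = ⨆ n, ∫⁻ ω, A n ω ^ 2 ∂P := lintegral_iSup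
        (fun n => (hAmeas n).pow_const 2)
        (fun n n' h ω => pow_le_pow_left' (hAmono h ω) 2)
    _ ≤ 4 * ∫⁻ ω, B ω ^ 2 ∂P := iSup_le hbound
end

section
/- Let p be a transition kernel on countable S invariant under a transitive group Π of permutations (p(πx, πy) = p(x,y) for all π ∈ Π), let X, Y be independent chains with kernel p started at o, let G_n(x,z) := Σ_{k=0}^n P_x[X_k = z], and I_n := Σ_{k,m=0}^n 1{X_k = Y_m}. Then E[I_n²] ≤ 4·(E[I_n])². -/
open MeasureTheory ProbabilityTheory

open Classical in
/-- `X` is a Markov chain on a countable state space with transition kernel `p`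
and initial state `x₀`, under the probability measure `P`: the finite-dimensional
distributions are given by products of transition probabilities. -/
def IsMarkovChain {Ω S : Type*} [MeasurableSpace Ω] [MeasurableSpace S]
    (P : Measure Ω) (X : ℕ → Ω → S) (p : S → S → ENNReal) (x₀ : S) : Prop :=
  (∀ n, Measurable (X n)) ∧
  ∀ (n : ℕ) (γ : ℕ → S), P {ω | ∀ i ≤ n, X i ω = γ i}
    = (if γ 0 = x₀ then 1 else 0) * ∏ i ∈ Finset.range n, p (γ i) (γ (i + 1))

/-- A chain is transient if a.s. each state is visited only finitely often. -/
def Transient {Ω S : Type*} [MeasurableSpace Ω] (P : Measure Ω) (X : ℕ → Ω → S) : Prop :=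
  ∀ᵐ ω ∂P, ∀ z : S, {m : ℕ | X m ω = z}.Finite

/-- The indices of the loop-erasure of an infinite path `γ` in which every state
occurs finitely often: `leIdx γ 0 = 0`, and `leIdx γ (j+1) = k + 1` where `k` is the
last index with `γ k = γ (leIdx γ j)`. -/
noncomputable def leIdx {S : Type*} (γ : ℕ → S) : ℕ → ℕ
  | 0 => 0
  | j + 1 => sSup {k | γ k = γ (leIdx γ j)} + 1

/-- The loop-erasure of a path, viewed as a set of states. -/
noncomputable def loopErasure {S : Type*} (γ : ℕ → S) : Set S :=
  Set.range fun j => γ (leIdx γ j)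

namespace SMI

variable {S : Type*}

open Classical in
/-- iterated kernel -/
noncomputable def pk (p : S → S → ENNReal) : ℕ → S → S → ENNReal
  | 0 => fun x z => if x = z then 1 else 0
  | (k+1) => fun x z => ∑' t, pk p k x t * p t z

lemma pk_inv (p : S → S → ENNReal) (π : Equiv.Perm S)
    (hπ : ∀ a b, p (π a) (π b) = p a b) :
    ∀ (k : ℕ) (x z : S), pk p k (π x) (π z) = pk p k x z := by
  classical
  intro k
  induction k with
  | zero =>
      intro x z
      show (if π x = π z then 1 else 0) = if x = z then 1 else 0
      simp [π.injective.eq_iff]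
  | succ k ih =>
      intro x z
      show ∑' t, pk p k (π x) t * p t (π z) = ∑' t, pk p k x t * p t z
      rw [← π.tsum_eq (fun t => pk p k (π x) t * p t (π z))]
      simp only [ih, hπ]

/-- snoc equivalence -/
noncomputable def snocEquiv (S : Type*) (m : ℕ) : ((Fin (m+1) → S) × S) ≃ (Fin (m+2) → S) where
  toFun gs := Fin.snoc gs.1 gs.2
  invFun h := (fun i => h i.castSucc, h (Fin.last _))
  left_inv := by rintro ⟨g, s⟩; simp
  right_inv := by
    intro h; funext i
    refine Fin.lastCases ?_ ?_ i <;> simp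

lemma snoc_mk_le {m : ℕ} (g : Fin (m+1) → S) (s : S) (i : ℕ) (h : i ≤ m) :
    (Fin.snoc g s : Fin (m+2) → S) ⟨i, by omega⟩ = g ⟨i, by omega⟩ := by
  have h2 : (⟨i, by omega⟩ : Fin (m+2)) = Fin.castSucc ⟨i, by omega⟩ := rfl
  rw [h2, Fin.snoc_castSucc]

/-- truncated extension of a finite path -/
def extg {m : ℕ} (g : Fin (m+1) → S) : ℕ → S := fun i => g ⟨min i m, by omega⟩

lemma extg_le {m : ℕ} (g : Fin (m+1) → S) (i : ℕ) (h : i ≤ m) :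
    extg g i = g ⟨i, by omega⟩ := by
  simp [extg, Nat.min_eq_left h]

lemma extg_snoc_le {m : ℕ} (g : Fin (m+1) → S) (s : S) (i : ℕ) (h : i ≤ m) :
    extg (Fin.snoc g s : Fin (m+2) → S) i = extg g i := by
  rw [extg_le _ i (by omega : i ≤ m + 1), extg_le g i h, snoc_mk_le g s i h]

lemma extg_snoc_last {m : ℕ} (g : Fin (m+1) → S) (s : S) :
    extg (Fin.snoc g s : Fin (m+2) → S) (m+1) = s := by
  rw [extg_le _ (m+1) (le_refl _)]
  have : (⟨m+1, by omega⟩ : Fin (m+2)) = Fin.last (m+1) := rfl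
  rw [this]
  exact Fin.snoc_last _ _

open Classical in
/-- weight of a finite path -/
noncomputable def W (p : S → S → ENNReal) (o : S) (m : ℕ) (g : Fin (m+1) → S) : ENNReal :=
  (if extg g 0 = o then 1 else 0) * ∏ i ∈ Finset.range m, p (extg g i) (extg g (i+1))

lemma W_snoc (p : S → S → ENNReal) (o : S) (m : ℕ) (g : Fin (m+1) → S) (s : S) :
    W p o (m+1) (Fin.snoc g s) = W p o m g * p (g (Fin.last m)) s := by
  classical
  unfold W
  rw [Finset.prod_range_succ]
  have h0 : extg (Fin.snoc g s : Fin (m+2) → S) 0 = extg g 0 := extg_snoc_le g s 0 (by omega)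
  have hm : extg (Fin.snoc g s : Fin (m+2) → S) m = g (Fin.last m) := by
    rw [extg_snoc_le g s m le_rfl, extg_le g m le_rfl]; rfl
  have hm1 : extg (Fin.snoc g s : Fin (m+2) → S) (m+1) = s := extg_snoc_last g s
  have hprod : ∏ i ∈ Finset.range m, p (extg (Fin.snoc g s : Fin (m+2) → S) i)
      (extg (Fin.snoc g s : Fin (m+2) → S) (i+1))
      = ∏ i ∈ Finset.range m, p (extg g i) (extg g (i+1)) := by
    refine Finset.prod_congr rfl fun i hi => ?_
    rw [Finset.mem_range] at hi
    rw [extg_snoc_le g s i (by omega), extg_snoc_le g s (i+1) (by omega)]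
  rw [h0, hm, hm1, hprod, mul_assoc]


open Classical in
lemma tsum_ite_eq' {β : Type*} (z : β) (f : β → ENNReal) :
    ∑' s, (if s = z then f s else 0) = f z := by
  classical
  have : (fun s => if s = z then f s else 0) = (fun s => if s = z then f z else 0) := by
    funext s
    by_cases h : s = z
    · subst h; simp
    · simp [h]
  rw [this, tsum_ite_eq]

open Classical in
lemma tsum_ite_eq'' {β : Type*} (z : β) (f : β → ENNReal) :
    ∑' s, (if z = s then f s else 0) = f z := by
  classical
  rw [show (fun s => if z = s then f s else 0) = (fun s => if s = z then f s else 0) by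
    funext s
    by_cases h : s = z
    · simp [h]
    · rw [if_neg h, if_neg (fun hh => h hh.symm)]]
  exact tsum_ite_eq' z f

variable [Countable S]

open Classical in
lemma sum_path_last (p : S → S → ENNReal) (o : S) (k : ℕ) (z : S) :
    ∑' g : Fin (k+1) → S, (if g (Fin.last k) = z then W p o k g else 0) = pk p k o z := by
  induction k generalizing z with
  | zero =>
      rw [← (Equiv.funUnique (Fin 1) S).symm.tsum_eq]
      show ∑' s : S, (if ((Equiv.funUnique (Fin 1) S).symm s) (Fin.last 0) = z
          then W p o 0 ((Equiv.funUnique (Fin 1) S).symm s) else 0) = pk p 0 o z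
      have hval : ∀ s : S, (if ((Equiv.funUnique (Fin 1) S).symm s) (Fin.last 0) = z
          then W p o 0 ((Equiv.funUnique (Fin 1) S).symm s) else 0)
          = (if s = z then (if s = o then (1:ENNReal) else 0) else 0) := by
        intro s
        have h1 : ((Equiv.funUnique (Fin 1) S).symm s) (Fin.last 0) = s := rfl
        have h2 : W p o 0 ((Equiv.funUnique (Fin 1) S).symm s)
            = (if s = o then 1 else 0) := by
          unfold W
          have : extg ((Equiv.funUnique (Fin 1) S).symm s) 0 = s := rfl
          rw [this]
          simp
        rw [h1, h2]
      simp_rw [hval]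
      rw [tsum_ite_eq' z (fun s => if s = o then (1:ENNReal) else 0)]
      show (if z = o then (1:ENNReal) else 0) = if o = z then 1 else 0
      by_cases h : z = o
      · simp [h]
      · rw [if_neg h, if_neg (fun hh => h hh.symm)]
  | succ k ih =>
      rw [← (snocEquiv S k).tsum_eq]
      trans (∑' (g : Fin (k+1) → S) (s : S),
        if (snocEquiv S k (g, s)) (Fin.last (k+1)) = z then W p o (k+1) (snocEquiv S k (g, s))
          else 0)
      · exact ENNReal.tsum_prod (f := fun g s =>
          if (snocEquiv S k) (g, s) (Fin.last (k+1)) = z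
            then W p o (k+1) ((snocEquiv S k) (g, s)) else 0)
      have hterm : ∀ (g : Fin (k+1) → S) (s : S),
          (if (snocEquiv S k (g, s)) (Fin.last (k+1)) = z
            then W p o (k+1) (snocEquiv S k (g, s)) else 0)
          = (if s = z then W p o k g * p (g (Fin.last k)) s else 0) := by
        intro g s
        have h1 : (snocEquiv S k (g, s)) (Fin.last (k+1)) = s := by
          show (Fin.snoc g s : Fin (k+2) → S) (Fin.last (k+1)) = s
          exact Fin.snoc_last _ _
        have h2 : W p o (k+1) (snocEquiv S k (g, s)) = W p o k g * p (g (Fin.last k)) s :=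
          W_snoc p o k g s
        rw [h1, h2]
      simp_rw [hterm]
      have hinner : ∀ g : Fin (k+1) → S,
          ∑' s, (if s = z then W p o k g * p (g (Fin.last k)) s else 0)
          = W p o k g * p (g (Fin.last k)) z :=
        fun g => tsum_ite_eq' z _
      simp_rw [hinner]
      -- partition by g last
      have hpart : ∀ g : Fin (k+1) → S,
          W p o k g * p (g (Fin.last k)) z
          = ∑' t, (if g (Fin.last k) = t then W p o k g else 0) * p t z := by
        intro g
        rw [show (fun t => (if g (Fin.last k) = t then W p o k g else 0) * p t z)
            = (fun t => if g (Fin.last k) = t then W p o k g * p t z else 0) by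
          funext t; by_cases h : g (Fin.last k) = t <;> simp [h]]
        rw [tsum_ite_eq'' (g (Fin.last k)) (fun t => W p o k g * p t z)]
      simp_rw [hpart]
      rw [ENNReal.tsum_comm]
      show ∑' t, ∑' g : Fin (k+1) → S, (if g (Fin.last k) = t then W p o k g else 0) * p t z
          = pk p (k+1) o z
      have : ∀ t : S, ∑' g : Fin (k+1) → S,
          (if g (Fin.last k) = t then W p o k g else 0) * p t z = pk p k o t * p t z := by
        intro t
        rw [ENNReal.tsum_mul_right, ih t]
      simp_rw [this]
      rfl


open Classical in
lemma sum_path_two (p : S → S → ENNReal) (o : S) (k l : ℕ) (z w : S) :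
    ∑' g : Fin (k+l+1) → S,
      (if g ⟨k, by omega⟩ = z ∧ g (Fin.last (k+l)) = w then W p o (k+l) g else 0)
      = pk p k o z * pk p l z w := by
  induction l generalizing w with
  | zero =>
      have hmk : (⟨k, by omega⟩ : Fin (k+0+1)) = Fin.last (k+0) := rfl
      by_cases hzw : z = w
      · subst hzw
        simp_rw [hmk, and_self]
        rw [sum_path_last p o (k+0) z]
        show pk p k o z = pk p k o z * pk p 0 z z
        have : pk p 0 z z = 1 := by
          show (if z = z then (1:ENNReal) else 0) = 1
          simp
        rw [this, mul_one]
      · have hz : pk p 0 z w = 0 := by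
          show (if z = w then (1:ENNReal) else 0) = 0
          simp [hzw]
        rw [hz, mul_zero]
        refine ENNReal.tsum_eq_zero.mpr fun g => ?_
        rw [if_neg]
        rintro ⟨h1, h2⟩
        exact hzw ((hmk ▸ h1 : g (Fin.last (k+0)) = z).symm.trans h2 ▸ rfl)
  | succ l ih =>
      show (∑' (g : Fin (k+l+1+1) → S),
          if g ⟨k, by omega⟩ = z ∧ g (Fin.last (k+l+1)) = w then W p o (k+l+1) g else 0)
        = pk p k o z * pk p (l+1) z w
      rw [← (snocEquiv S (k+l)).tsum_eq]
      trans (∑' (g : Fin (k+l+1) → S) (s : S),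
        if (snocEquiv S (k+l) (g, s)) ⟨k, by omega⟩ = z ∧
            (snocEquiv S (k+l) (g, s)) (Fin.last (k+l+1)) = w
          then W p o (k+l+1) (snocEquiv S (k+l) (g, s)) else 0)
      · exact ENNReal.tsum_prod (f := fun g s =>
          if (snocEquiv S (k+l) (g, s)) ⟨k, by omega⟩ = z ∧
              (snocEquiv S (k+l) (g, s)) (Fin.last (k+l+1)) = w
            then W p o (k+l+1) (snocEquiv S (k+l) (g, s)) else 0)
      have hterm : ∀ (g : Fin (k+l+1) → S) (s : S),
          (if (snocEquiv S (k+l) (g, s)) ⟨k, by omega⟩ = z ∧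
              (snocEquiv S (k+l) (g, s)) (Fin.last (k+l+1)) = w
            then W p o (k+l+1) (snocEquiv S (k+l) (g, s)) else 0)
          = (if s = w then (if g ⟨k, by omega⟩ = z then W p o (k+l) g else 0)
              * p (g (Fin.last (k+l))) s else 0) := by
        intro g s
        have h1 : (snocEquiv S (k+l) (g, s)) (⟨k, by omega⟩ : Fin (k+l+2)) = g ⟨k, by omega⟩ :=
          snoc_mk_le g s k (by omega)
        have h2 : (snocEquiv S (k+l) (g, s)) (Fin.last (k+l+1)) = s := by
          show (Fin.snoc g s : Fin (k+l+2) → S) (Fin.last (k+l+1)) = s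
          exact Fin.snoc_last _ _
        have h3 : W p o (k+l+1) (snocEquiv S (k+l) (g, s))
            = W p o (k+l) g * p (g (Fin.last (k+l))) s := W_snoc p o (k+l) g s
        rw [h1, h2, h3]
        by_cases hs : s = w
        · by_cases hg : g ⟨k, by omega⟩ = z
          · simp [hs, hg]
          · simp [hs, hg]
        · simp [hs]
      simp_rw [hterm]
      have hinner : ∀ g : Fin (k+l+1) → S,
          ∑' s, (if s = w then (if g ⟨k, by omega⟩ = z then W p o (k+l) g else 0)
              * p (g (Fin.last (k+l))) s else 0)
          = (if g ⟨k, by omega⟩ = z then W p o (k+l) g else 0) * p (g (Fin.last (k+l))) w :=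
        fun g => tsum_ite_eq' w _
      simp_rw [hinner]
      have hpart : ∀ g : Fin (k+l+1) → S,
          (if g ⟨k, by omega⟩ = z then W p o (k+l) g else 0) * p (g (Fin.last (k+l))) w
          = ∑' t, (if g ⟨k, by omega⟩ = z ∧ g (Fin.last (k+l)) = t
              then W p o (k+l) g else 0) * p t w := by
        intro g
        rw [show (fun t => (if g ⟨k, by omega⟩ = z ∧ g (Fin.last (k+l)) = t
              then W p o (k+l) g else 0) * p t w)
            = (fun t => if g (Fin.last (k+l)) = t
                then (if g ⟨k, by omega⟩ = z then W p o (k+l) g else 0) * p t w else 0) by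
          funext t
          by_cases ht : g (Fin.last (k+l)) = t
          · by_cases hgk : g ⟨k, by omega⟩ = z <;> simp [ht, hgk]
          · simp [ht]]
        rw [tsum_ite_eq'' (g (Fin.last (k+l)))
          (fun t => (if g ⟨k, by omega⟩ = z then W p o (k+l) g else 0) * p t w)]
      simp_rw [hpart]
      rw [ENNReal.tsum_comm]
      have hfin : ∀ t : S, ∑' g : Fin (k+l+1) → S,
          (if g ⟨k, by omega⟩ = z ∧ g (Fin.last (k+l)) = t then W p o (k+l) g else 0) * p t w
          = pk p k o z * pk p l z t * p t w := by
        intro t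
        rw [ENNReal.tsum_mul_right, ih t]
      simp_rw [hfin]
      show ∑' t, pk p k o z * pk p l z t * p t w = pk p k o z * pk p (l+1) z w
      have : pk p (l+1) z w = ∑' t, pk p l z t * p t w := rfl
      rw [this, ← ENNReal.tsum_mul_left]
      simp_rw [mul_assoc]


variable {Ω : Type*} [MeasurableSpace Ω] [MeasurableSpace S] [DiscreteMeasurableSpace S]

open Classical in
lemma measure_cyl (P : Measure Ω) (X : ℕ → Ω → S) (p : S → S → ENNReal) (o : S)
    (hX : IsMarkovChain P X p o) (m : ℕ) (B : (Fin (m+1) → S) → Prop) :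
    P {ω | B (fun j => X j ω)} = ∑' g : Fin (m+1) → S, if B g then W p o m g else 0 := by
  set A : (Fin (m+1) → S) → Set Ω :=
    fun g => {ω | (∀ j : Fin (m+1), X j ω = g j)} ∩ {ω | B g} with hA
  have hmeas : ∀ g, MeasurableSet (A g) := by
    intro g
    refine MeasurableSet.inter ?_ ?_
    · have : {ω | (∀ j : Fin (m+1), X j ω = g j)} = ⋂ j : Fin (m+1), (X j) ⁻¹' {g j} := by
        ext ω; simp [Set.mem_iInter]
      rw [this]
      exact MeasurableSet.iInter fun j => hX.1 j (measurableSet_singleton _)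
    · by_cases hB : B g
      · simp [hB]
      · simp [hB]
  have hdisj : Pairwise (Function.onFun Disjoint A) := by
    intro g g' hne
    refine Set.disjoint_left.mpr ?_
    rintro ω ⟨h1, -⟩ ⟨h2, -⟩
    exact hne (funext fun j => (h1 j).symm.trans (h2 j))
  have hset : {ω | B (fun j => X j ω)} = ⋃ g, A g := by
    ext ω
    simp only [Set.mem_setOf_eq, Set.mem_iUnion, hA, Set.mem_inter_iff]
    constructor
    · intro h
      exact ⟨fun j => X j ω, fun j => rfl, h⟩
    · rintro ⟨g, hg, hB⟩
      have : (fun j : Fin (m+1) => X j ω) = g := funext hg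
      rw [this]; exact hB
  rw [hset, measure_iUnion hdisj hmeas]
  congr 1
  funext g
  by_cases hB : B g
  · have hAg : A g = {ω | ∀ i ≤ m, X i ω = extg g i} := by
      rw [hA]
      ext ω
      simp only [Set.mem_inter_iff, Set.mem_setOf_eq, hB, and_true]
      constructor
      · intro h i hi
        rw [extg_le g i hi]
        exact h ⟨i, by omega⟩
      · intro h j
        have := h j (by omega : (j : ℕ) ≤ m)
        rw [extg_le g j (by omega)] at this
        rw [← this]
    rw [hAg, hX.2 m (extg g), if_pos hB]
    rfl
  · have hAg : A g = ∅ := by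
      rw [hA]
      ext ω; simp [hB]
    rw [hAg, if_neg hB, measure_empty]

lemma measure_two (P : Measure Ω) (X : ℕ → Ω → S) (p : S → S → ENNReal) (o : S)
    (hX : IsMarkovChain P X p o) (k l : ℕ) (z w : S) :
    P {ω | X k ω = z ∧ X (k+l) ω = w} = pk p k o z * pk p l z w := by
  classical
  have h := measure_cyl P X p o hX (k+l)
    (fun g => g ⟨k, by omega⟩ = z ∧ g (Fin.last (k+l)) = w)
  have hs : {ω | X k ω = z ∧ X (k+l) ω = w}
      = {ω | (fun j : Fin (k+l+1) => X j ω) ⟨k, by omega⟩ = z ∧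
          (fun j : Fin (k+l+1) => X j ω) (Fin.last (k+l)) = w} := rfl
  rw [hs, h, ← sum_path_two p o k l z w]
  congr 1
  funext g
  congr

lemma measure_one (P : Measure Ω) (X : ℕ → Ω → S) (p : S → S → ENNReal) (o : S)
    (hX : IsMarkovChain P X p o) (k : ℕ) (z : S) :
    P {ω | X k ω = z} = pk p k o z := by
  classical
  have h := measure_two P X p o hX k 0 z z
  have hs : {ω | X k ω = z ∧ X (k+0) ω = z} = {ω | X k ω = z} := by
    ext ω; simp
  rw [hs] at h
  have h1 : pk p 0 z z = 1 := by
    show (if z = z then (1:ENNReal) else 0) = 1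
    simp
  rw [h, h1, mul_one]


lemma sum_F_le (P : Measure Ω) (X : ℕ → Ω → S) (p : S → S → ENNReal) (o : S)
    (hX : IsMarkovChain P X p o) (n : ℕ) (z w : S) :
    ∑ k ∈ Finset.range (n+1), ∑ i ∈ Finset.range (n+1), P {ω | X k ω = z ∧ X i ω = w}
      ≤ (∑ k ∈ Finset.range (n+1), pk p k o z) * (∑ l ∈ Finset.range (n+1), pk p l z w)
        + (∑ k ∈ Finset.range (n+1), pk p k o w) * (∑ l ∈ Finset.range (n+1), pk p l w z) := by
  classical
  have key : ∀ (a b : S), ∑ k ∈ Finset.range (n+1), ∑ i ∈ Finset.range (n+1),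
      (if k ≤ i then pk p k o a * pk p (i-k) a b else 0)
      ≤ (∑ k ∈ Finset.range (n+1), pk p k o a) * (∑ l ∈ Finset.range (n+1), pk p l a b) := by
    intro a b
    rw [Finset.sum_mul]
    refine Finset.sum_le_sum fun k hk => ?_
    rw [← Finset.sum_filter]
    have hfil : Finset.filter (fun i => k ≤ i) (Finset.range (n+1)) = Finset.Ico k (n+1) := by
      ext i
      simp only [Finset.mem_filter, Finset.mem_range, Finset.mem_Ico]
      omega
    rw [hfil, Finset.sum_Ico_eq_sum_range]
    have hsimp : ∀ i, pk p k o a * pk p (k + i - k) a b = pk p k o a * pk p i a b := by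
      intro i
      congr 2
      omega
    simp_rw [hsimp]
    rw [Finset.mul_sum]
    exact Finset.sum_le_sum_of_subset (Finset.range_subset_range.mpr (by omega))
  have hterm : ∀ k i, P {ω | X k ω = z ∧ X i ω = w}
      ≤ (if k ≤ i then pk p k o z * pk p (i-k) z w else 0)
        + (if i ≤ k then pk p i o w * pk p (k-i) w z else 0) := by
    intro k i
    by_cases h : k ≤ i
    · have hi : i = k + (i - k) := by omega
      have heq : P {ω | X k ω = z ∧ X i ω = w} = pk p k o z * pk p (i-k) z w := by
        have := measure_two P X p o hX k (i-k) z w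
        rw [← hi] at this
        exact this
      rw [if_pos h, heq]
      exact le_self_add
    · have hle : i ≤ k := by omega
      have hk2 : k = i + (k - i) := by omega
      have heq : P {ω | X k ω = z ∧ X i ω = w} = pk p i o w * pk p (k-i) w z := by
        have := measure_two P X p o hX i (k-i) w z
        rw [← hk2] at this
        have hset : {ω | X k ω = z ∧ X i ω = w} = {ω | X i ω = w ∧ X k ω = z} := by
          ext ω; exact and_comm
        rw [hset]
        exact this
      rw [if_neg h, if_pos hle, heq]
      exact le_add_self
  calc ∑ k ∈ Finset.range (n+1), ∑ i ∈ Finset.range (n+1), P {ω | X k ω = z ∧ X i ω = w}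
      ≤ ∑ k ∈ Finset.range (n+1), ∑ i ∈ Finset.range (n+1),
        ((if k ≤ i then pk p k o z * pk p (i-k) z w else 0)
          + (if i ≤ k then pk p i o w * pk p (k-i) w z else 0)) :=
        Finset.sum_le_sum fun k _ => Finset.sum_le_sum fun i _ => hterm k i
    _ = (∑ k ∈ Finset.range (n+1), ∑ i ∈ Finset.range (n+1),
          (if k ≤ i then pk p k o z * pk p (i-k) z w else 0))
        + (∑ k ∈ Finset.range (n+1), ∑ i ∈ Finset.range (n+1),
          (if i ≤ k then pk p i o w * pk p (k-i) w z else 0)) := by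
        rw [← Finset.sum_add_distrib]
        exact Finset.sum_congr rfl fun k _ => Finset.sum_add_distrib
    _ ≤ _ := by
        gcongr
        · exact key z w
        · rw [Finset.sum_comm]
          exact key w z

lemma add_mul_self_le (a b : ENNReal) :
    (a + b) * (a + b) ≤ 2 * (a * a) + 2 * (b * b) := by
  rcases eq_or_ne a ⊤ with ha | ha
  · have h : 2 * (a * a) = ⊤ := by simp [ha]
    rw [h, top_add]
    exact le_top
  rcases eq_or_ne b ⊤ with hb | hb
  · have h : 2 * (b * b) = ⊤ := by simp [hb]
    rw [h, add_top]
    exact le_top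
  lift a to NNReal using ha
  lift b to NNReal using hb
  have hnn : (a + b) * (a + b) ≤ 2 * (a * a) + 2 * (b * b) := by
    rw [← NNReal.coe_le_coe]
    push_cast
    nlinarith [sq_nonneg ((a : ℝ) - (b : ℝ))]
  calc ((a : ENNReal) + b) * ((a : ENNReal) + b)
      = (((a + b) * (a + b) : NNReal) : ENNReal) := by push_cast; ring
    _ ≤ (((2 * (a * a) + 2 * (b * b) : NNReal)) : ENNReal) := ENNReal.coe_le_coe.mpr hnn
    _ = 2 * ((a : ENNReal) * a) + 2 * ((b : ENNReal) * b) := by push_cast; ring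

lemma sum_tsum {ι β : Type*} (s : Finset ι) (f : ι → β → ENNReal) :
    ∑ i ∈ s, ∑' b, f i b = ∑' b, ∑ i ∈ s, f i b :=
  (Summable.tsum_finsetSum fun _ _ => ENNReal.summable).symm

end SMI

open Classical in
/-- For a transition kernel invariant under a transitive group of
permutations, the intersection count `I_n` of two independent chains started at `o`
satisfies `E[I_n²] ≤ 4 (E[I_n])²`. -/
theorem second_moment_intersections_transitive
    {Ω S : Type*} [MeasurableSpace Ω] [Countable S] [MeasurableSpace S]
    [DiscreteMeasurableSpace S]
    (P : Measure Ω) [IsProbabilityMeasure P]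
    (X Y : ℕ → Ω → S) (p : S → S → ENNReal) (o : S)
    (htrans : ∀ x y : S, ∃ π : Equiv.Perm S, (∀ a b, p (π a) (π b) = p a b) ∧ π x = y)
    (hX : IsMarkovChain P X p o) (hY : IsMarkovChain P Y p o)
    (hind : IndepFun (fun ω n => X n ω) (fun ω n => Y n ω) P)
    (n : ℕ) :
    ∫⁻ ω, (∑ k ∈ Finset.range (n + 1), ∑ m ∈ Finset.range (n + 1),
        if X k ω = Y m ω then (1 : ENNReal) else 0) ^ 2 ∂P
      ≤ 4 * (∫⁻ ω, ∑ k ∈ Finset.range (n + 1), ∑ m ∈ Finset.range (n + 1),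
          (if X k ω = Y m ω then (1 : ENNReal) else 0) ∂P) ^ 2 := by
  classical
  set R := Finset.range (n+1) with hR
  set G : S → ENNReal := fun z => ∑ k ∈ R, SMI.pk p k o z with hG
  set Hm : S → S → ENNReal := fun z w => ∑ l ∈ R, SMI.pk p l z w with hHm
  -- measurability of basic sets
  have hsetU : ∀ k m, {ω | X k ω = Y m ω}
      = ⋃ z : S, ({ω | X k ω = z} ∩ {ω | Y m ω = z}) := by
    intro k m
    ext ω
    simp only [Set.mem_setOf_eq, Set.mem_iUnion, Set.mem_inter_iff]
    constructor
    · intro h; exact ⟨Y m ω, h, rfl⟩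
    · rintro ⟨z, h1, h2⟩; rw [h1, h2]
  have hmXz : ∀ k (z : S), MeasurableSet {ω | X k ω = z} :=
    fun k z => (hX.1 k) (measurableSet_singleton z)
  have hmYz : ∀ m (z : S), MeasurableSet {ω | Y m ω = z} :=
    fun m z => (hY.1 m) (measurableSet_singleton z)
  have hsetm : ∀ k m, MeasurableSet {ω | X k ω = Y m ω} := by
    intro k m
    rw [hsetU k m]
    exact MeasurableSet.iUnion fun z => (hmXz k z).inter (hmYz m z)
  have hmeasInd : ∀ k m, Measurable (fun ω => if X k ω = Y m ω then (1:ENNReal) else 0) :=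
    fun k m => Measurable.ite (hsetm k m) measurable_const measurable_const
  have hind' := (indepFun_iff_measure_inter_preimage_eq_mul).mp hind
  -- one-point joint measure
  have hone : ∀ k m (z : S), P ({ω | X k ω = z} ∩ {ω | Y m ω = z})
      = SMI.pk p k o z * SMI.pk p m o z := by
    intro k m z
    have hA : MeasurableSet ((fun h : ℕ → S => h k) ⁻¹' {z}) :=
      measurable_pi_apply k (measurableSet_singleton z)
    have hB : MeasurableSet ((fun h : ℕ → S => h m) ⁻¹' {z}) :=
      measurable_pi_apply m (measurableSet_singleton z)
    have h2 := hind' _ _ hA hB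
    calc P ({ω | X k ω = z} ∩ {ω | Y m ω = z})
        = P {ω | X k ω = z} * P {ω | Y m ω = z} := h2
      _ = SMI.pk p k o z * SMI.pk p m o z := by
          rw [SMI.measure_one P X p o hX k z, SMI.measure_one P Y p o hY m z]
  -- two-point joint measure
  have htwo : ∀ k i m j (z w : S),
      P ({ω | X k ω = z ∧ X i ω = w} ∩ {ω | Y m ω = z ∧ Y j ω = w})
      = P {ω | X k ω = z ∧ X i ω = w} * P {ω | Y m ω = z ∧ Y j ω = w} := by
    intro k i m j z w
    have hA : MeasurableSet ((fun h : ℕ → S => h k) ⁻¹' {z} ∩ (fun h : ℕ → S => h i) ⁻¹' {w}) :=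
      (measurable_pi_apply k (measurableSet_singleton z)).inter
        (measurable_pi_apply i (measurableSet_singleton w))
    have hB : MeasurableSet ((fun h : ℕ → S => h m) ⁻¹' {z} ∩ (fun h : ℕ → S => h j) ⁻¹' {w}) :=
      (measurable_pi_apply m (measurableSet_singleton z)).inter
        (measurable_pi_apply j (measurableSet_singleton w))
    exact hind' _ _ hA hB
  -- E[I]
  have hlint : ∀ k m, ∫⁻ ω, (if X k ω = Y m ω then (1:ENNReal) else 0) ∂P
      = P {ω | X k ω = Y m ω} := by
    intro k m
    rw [← lintegral_indicator_one (hsetm k m)]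
    refine lintegral_congr fun ω => ?_
    rw [Set.indicator_apply]
    simp only [Set.mem_setOf_eq, Pi.one_apply]
  have hPeq : ∀ k m, P {ω | X k ω = Y m ω}
      = ∑' z : S, SMI.pk p k o z * SMI.pk p m o z := by
    intro k m
    rw [hsetU k m, measure_iUnion ?_ (fun z => (hmXz k z).inter (hmYz m z))]
    · exact tsum_congr fun z => hone k m z
    · intro z z' hne
      refine Set.disjoint_left.mpr ?_
      rintro ω ⟨h1, -⟩ ⟨h1', -⟩
      exact hne (h1.symm.trans h1')
  have hEI : (∫⁻ ω, ∑ k ∈ R, ∑ m ∈ R, (if X k ω = Y m ω then (1:ENNReal) else 0) ∂P)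
      = ∑' z : S, G z * G z := by
    rw [lintegral_finset_sum _ (fun k _ => Finset.measurable_sum _ (fun m _ => hmeasInd k m))]
    have hstep : ∀ k, ∫⁻ ω, ∑ m ∈ R, (if X k ω = Y m ω then (1:ENNReal) else 0) ∂P
        = ∑ m ∈ R, ∑' z : S, SMI.pk p k o z * SMI.pk p m o z := by
      intro k
      rw [lintegral_finset_sum _ (fun m _ => hmeasInd k m)]
      exact Finset.sum_congr rfl fun m _ => (hlint k m).trans (hPeq k m)
    rw [Finset.sum_congr rfl (fun k _ => hstep k)]
    simp_rw [SMI.sum_tsum]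
    exact tsum_congr fun z => (Finset.sum_mul_sum R R _ _).symm
  -- E[I^2]
  have hprodInd : ∀ k m i j (ω : Ω),
      (if X k ω = Y m ω then (1:ENNReal) else 0) * (if X i ω = Y j ω then 1 else 0)
      = if ω ∈ ({ω | X k ω = Y m ω} ∩ {ω | X i ω = Y j ω}) then 1 else 0 := by
    intro k m i j ω
    by_cases h1 : X k ω = Y m ω <;> by_cases h2 : X i ω = Y j ω <;>
      simp [h1, h2, Set.mem_inter_iff, Set.mem_setOf_eq]
  have hlint2 : ∀ k m i j,
      ∫⁻ ω, (if X k ω = Y m ω then (1:ENNReal) else 0) * (if X i ω = Y j ω then 1 else 0) ∂P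
      = P ({ω | X k ω = Y m ω} ∩ {ω | X i ω = Y j ω}) := by
    intro k m i j
    rw [← lintegral_indicator_one ((hsetm k m).inter (hsetm i j))]
    refine lintegral_congr fun ω => ?_
    rw [hprodInd k m i j ω, Set.indicator_apply]
    simp only [Pi.one_apply]
  have hsetU2 : ∀ k m i j, ({ω | X k ω = Y m ω} ∩ {ω | X i ω = Y j ω})
      = ⋃ zw : S × S, ({ω | X k ω = zw.1 ∧ X i ω = zw.2}
          ∩ {ω | Y m ω = zw.1 ∧ Y j ω = zw.2}) := by
    intro k m i j
    ext ω
    simp only [Set.mem_inter_iff, Set.mem_setOf_eq, Set.mem_iUnion]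
    constructor
    · rintro ⟨h1, h2⟩
      exact ⟨(Y m ω, Y j ω), ⟨h1, h2⟩, rfl, rfl⟩
    · rintro ⟨zw, ⟨ha, hb⟩, hc, hd⟩
      exact ⟨ha.trans hc.symm, hb.trans hd.symm⟩
  have hmeas2 : ∀ k i m j (zw : S × S),
      MeasurableSet ({ω | X k ω = zw.1 ∧ X i ω = zw.2}
        ∩ {ω | Y m ω = zw.1 ∧ Y j ω = zw.2}) :=
    fun k i m j zw => ((hmXz k zw.1).inter (hmXz i zw.2)).inter
      ((hmYz m zw.1).inter (hmYz j zw.2))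
  have hP2 : ∀ k m i j, P ({ω | X k ω = Y m ω} ∩ {ω | X i ω = Y j ω})
      = ∑' zw : S × S, P {ω | X k ω = zw.1 ∧ X i ω = zw.2}
          * P {ω | Y m ω = zw.1 ∧ Y j ω = zw.2} := by
    intro k m i j
    rw [hsetU2 k m i j, measure_iUnion ?_ (fun zw => hmeas2 k i m j zw)]
    · exact tsum_congr fun zw => htwo k i m j zw.1 zw.2
    · intro zw zw' hne
      refine Set.disjoint_left.mpr ?_
      rintro ω ⟨-, hy⟩ ⟨-, hy'⟩
      exact hne (Prod.ext (hy.1.symm.trans hy'.1) (hy.2.symm.trans hy'.2))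
  have hterm4 : ∀ k m i j,
      ∫⁻ ω, (if X k ω = Y m ω then (1:ENNReal) else 0) * (if X i ω = Y j ω then 1 else 0) ∂P
      = ∑' zw : S × S, P {ω | X k ω = zw.1 ∧ X i ω = zw.2}
          * P {ω | Y m ω = zw.1 ∧ Y j ω = zw.2} :=
    fun k m i j => (hlint2 k m i j).trans (hP2 k m i j)
  have hsq : ∀ ω, (∑ k ∈ R, ∑ m ∈ R, (if X k ω = Y m ω then (1:ENNReal) else 0)) ^ 2
      = ∑ k ∈ R, ∑ m ∈ R, ∑ i ∈ R, ∑ j ∈ R,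
        (if X k ω = Y m ω then (1:ENNReal) else 0) * (if X i ω = Y j ω then 1 else 0) := by
    intro ω
    rw [pow_two, Finset.sum_mul_sum]
    refine Finset.sum_congr rfl fun k _ => ?_
    rw [show (∑ i ∈ R, (∑ m ∈ R, if X k ω = Y m ω then (1:ENNReal) else 0)
          * (∑ j ∈ R, if X i ω = Y j ω then (1:ENNReal) else 0))
        = ∑ i ∈ R, ∑ m ∈ R, ∑ j ∈ R,
            (if X k ω = Y m ω then (1:ENNReal) else 0)
              * (if X i ω = Y j ω then (1:ENNReal) else 0) from
      Finset.sum_congr rfl fun i _ => by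
        rw [Finset.sum_mul_sum]]
    exact Finset.sum_comm
  have hEI2 : (∫⁻ ω, (∑ k ∈ R, ∑ m ∈ R, (if X k ω = Y m ω then (1:ENNReal) else 0)) ^ 2 ∂P)
      = ∑' zw : S × S, (∑ k ∈ R, ∑ i ∈ R, P {ω | X k ω = zw.1 ∧ X i ω = zw.2})
          * (∑ m ∈ R, ∑ j ∈ R, P {ω | Y m ω = zw.1 ∧ Y j ω = zw.2}) := by
    rw [lintegral_congr hsq]
    rw [lintegral_finset_sum _ (fun k _ => Finset.measurable_sum _ fun m _ =>
      Finset.measurable_sum _ fun i _ => Finset.measurable_sum _ fun j _ =>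
        (hmeasInd k m).fun_mul (hmeasInd i j))]
    have hstep : ∀ k, ∫⁻ ω, ∑ m ∈ R, ∑ i ∈ R, ∑ j ∈ R,
          (if X k ω = Y m ω then (1:ENNReal) else 0)
            * (if X i ω = Y j ω then 1 else 0) ∂P
        = ∑ m ∈ R, ∑ i ∈ R, ∑ j ∈ R, ∑' zw : S × S,
            P {ω | X k ω = zw.1 ∧ X i ω = zw.2} * P {ω | Y m ω = zw.1 ∧ Y j ω = zw.2} := by
      intro k
      rw [lintegral_finset_sum _ (fun m _ => Finset.measurable_sum _ fun i _ =>
        Finset.measurable_sum _ fun j _ => (hmeasInd k m).fun_mul (hmeasInd i j))]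
      refine Finset.sum_congr rfl fun m _ => ?_
      rw [lintegral_finset_sum _ (fun i _ =>
        Finset.measurable_sum _ fun j _ => (hmeasInd k m).fun_mul (hmeasInd i j))]
      refine Finset.sum_congr rfl fun i _ => ?_
      rw [lintegral_finset_sum _ (fun j _ => (hmeasInd k m).fun_mul (hmeasInd i j))]
      exact Finset.sum_congr rfl fun j _ => hterm4 k m i j
    rw [Finset.sum_congr rfl (fun k _ => hstep k)]
    simp_rw [SMI.sum_tsum]
    refine tsum_congr fun zw => ?_
    calc ∑ k ∈ R, ∑ m ∈ R, ∑ i ∈ R, ∑ j ∈ R,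
          P {ω | X k ω = zw.1 ∧ X i ω = zw.2} * P {ω | Y m ω = zw.1 ∧ Y j ω = zw.2}
        = ∑ k ∈ R, ∑ i ∈ R, ∑ m ∈ R, ∑ j ∈ R,
          P {ω | X k ω = zw.1 ∧ X i ω = zw.2} * P {ω | Y m ω = zw.1 ∧ Y j ω = zw.2} :=
          Finset.sum_congr rfl fun k _ => Finset.sum_comm
      _ = (∑ k ∈ R, ∑ i ∈ R, P {ω | X k ω = zw.1 ∧ X i ω = zw.2})
          * (∑ m ∈ R, ∑ j ∈ R, P {ω | Y m ω = zw.1 ∧ Y j ω = zw.2}) := by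
          simp_rw [Finset.sum_mul, Finset.mul_sum]
  -- transitivity
  have htra : ∀ z : S, (∑' w : S, Hm z w * Hm z w) = ∑' w : S, G w * G w := by
    intro z
    obtain ⟨π, hπ, hπo⟩ := htrans o z
    have hH : ∀ w, Hm z w = G (π.symm w) := by
      intro w
      simp only [hHm, hG]
      refine Finset.sum_congr rfl fun l _ => ?_
      conv_lhs => rw [← hπo, ← Equiv.apply_symm_apply π w]
      exact SMI.pk_inv p π hπ l o (π.symm w)
    simp_rw [hH]
    exact π.symm.tsum_eq fun w => G w * G w
  -- final chain
  calc ∫⁻ ω, (∑ k ∈ R, ∑ m ∈ R, (if X k ω = Y m ω then (1:ENNReal) else 0)) ^ 2 ∂P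
      = ∑' zw : S × S, (∑ k ∈ R, ∑ i ∈ R, P {ω | X k ω = zw.1 ∧ X i ω = zw.2})
          * (∑ m ∈ R, ∑ j ∈ R, P {ω | Y m ω = zw.1 ∧ Y j ω = zw.2}) := hEI2
    _ ≤ ∑' zw : S × S, (G zw.1 * Hm zw.1 zw.2 + G zw.2 * Hm zw.2 zw.1)
          * (G zw.1 * Hm zw.1 zw.2 + G zw.2 * Hm zw.2 zw.1) :=
        ENNReal.tsum_le_tsum fun zw => mul_le_mul'
          (SMI.sum_F_le P X p o hX n zw.1 zw.2) (SMI.sum_F_le P Y p o hY n zw.1 zw.2)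
    _ ≤ ∑' zw : S × S, (2 * ((G zw.1 * Hm zw.1 zw.2) * (G zw.1 * Hm zw.1 zw.2))
          + 2 * ((G zw.2 * Hm zw.2 zw.1) * (G zw.2 * Hm zw.2 zw.1))) :=
        ENNReal.tsum_le_tsum fun zw => SMI.add_mul_self_le _ _
    _ = 2 * (∑' zw : S × S, (G zw.1 * Hm zw.1 zw.2) * (G zw.1 * Hm zw.1 zw.2))
          + 2 * (∑' zw : S × S, (G zw.2 * Hm zw.2 zw.1) * (G zw.2 * Hm zw.2 zw.1)) := by
        rw [ENNReal.tsum_add, ENNReal.tsum_mul_left, ENNReal.tsum_mul_left]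
    _ = 4 * (∑' zw : S × S, (G zw.1 * Hm zw.1 zw.2) * (G zw.1 * Hm zw.1 zw.2)) := by
        rw [show (∑' zw : S × S, (G zw.2 * Hm zw.2 zw.1) * (G zw.2 * Hm zw.2 zw.1))
            = ∑' zw : S × S, (G zw.1 * Hm zw.1 zw.2) * (G zw.1 * Hm zw.1 zw.2) from
          (Equiv.prodComm S S).tsum_eq fun zw => (G zw.1 * Hm zw.1 zw.2) * (G zw.1 * Hm zw.1 zw.2)]
        ring
    _ = 4 * ((∑' z : S, G z * G z) * (∑' z : S, G z * G z)) := by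
        congr 1
        calc ∑' zw : S × S, (G zw.1 * Hm zw.1 zw.2) * (G zw.1 * Hm zw.1 zw.2)
            = ∑' z : S, ∑' w : S, (G z * Hm z w) * (G z * Hm z w) :=
              ENNReal.tsum_prod (f := fun z w => (G z * Hm z w) * (G z * Hm z w))
          _ = ∑' z : S, (G z * G z) * ∑' w : S, Hm z w * Hm z w := by
              refine tsum_congr fun z => ?_
              rw [← ENNReal.tsum_mul_left]
              exact tsum_congr fun w => by ring
          _ = ∑' z : S, (G z * G z) * ∑' w : S, G w * G w :=
              tsum_congr fun z => by rw [htra z]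
          _ = (∑' z : S, G z * G z) * (∑' w : S, G w * G w) := ENNReal.tsum_mul_right
    _ = 4 * (∫⁻ ω, ∑ k ∈ R, ∑ m ∈ R, (if X k ω = Y m ω then (1:ENNReal) else 0) ∂P) ^ 2 := by
        rw [hEI, pow_two]
end
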